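/- Let V_H ⊂ H¹₀(Ω) be a finite-dimensional subspace and let z_ε, z ∈ H¹₀(Ω) solve ∫_Ω a^ε ∇z_ε·∇v = ∫_Ω F v and ∫_Ω ∇z·∇v = ∫_Ω F v for all v ∈ H¹₀(Ω), where F ∈ L²(Ω). Set V_{H,a^ε} := {w ∈ H¹₀(Ω) : ∇·(a^ε∇w) = ∇·(∇v_H) for some v_H ∈ V_H} (the transferred space). Then the best-approximation errors in the respective flux norms coincide: inf_{v_H ∈ V_H} ‖z − v_H‖_{1-flux} = inf_{w ∈ V_{H,a^ε}} ‖z_ε − w‖_{a^ε-flux}. -/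

import Mathlib

open scoped RealInnerProductSpace

/-- the transfer property of the flux norm.  We work in the Hilbert space
`V = H¹₀(Ω)` equipped with the energy norm `‖∇·‖_{L²}`.  The bilinear form
`∫_Ω a^ε∇u·∇v` is represented by the bounded symmetric coercive operator `Aε` (so that
`∫ a^ε∇u·∇v = ⟪Aε u, v⟫`), and the `a^ε`-flux norm of `u` is `‖Aε u‖` while the `1`-flux
norm is the norm of `V` itself.  `z` and `z_ε` solve `∫ ∇z·∇v = F(v)` and
`∫ a^ε∇z_ε·∇v = F(v)` for all `v ∈ H¹₀(Ω)`.  The transferred space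
`V_{H,a^ε} = {w : ∇·(a^ε∇w) = Δv_H for some v_H ∈ V_H}` is `{w // Aε w ∈ V_H}`, and the
best-approximation errors in the respective flux norms coincide. -/
theorem stmt2 {V : Type*} [NormedAddCommGroup V] [InnerProductSpace ℝ V] [CompleteSpace V]
    (α β : ℝ) (hα : 0 < α) (hαβ : α ≤ β)
    (Aε : V →L[ℝ] V)
    (hsym : ∀ u v : V, ⟪Aε u, v⟫ = ⟪u, Aε v⟫)
    (hcoer : ∀ v : V, α * ‖v‖ ^ 2 ≤ ⟪Aε v, v⟫)
    (hbd : ∀ v : V, ‖Aε v‖ ≤ β * ‖v‖)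
    (VH : Submodule ℝ V) [FiniteDimensional ℝ VH]
    (F : V →L[ℝ] ℝ) (z zε : V)
    (hz : ∀ v : V, ⟪z, v⟫ = F v) (hzε : ∀ v : V, ⟪Aε zε, v⟫ = F v) :
    (⨅ vH : VH, ‖z - (vH : V)‖) =
      ⨅ w : {w : V // Aε w ∈ VH}, ‖Aε zε - Aε (w : V)‖ := by
  -- Step 1: `Aε zε = z`.
  have hAz : Aε zε = z := ext_inner_right ℝ fun v => by rw [hzε, hz]
  -- Step 2: lower bound `α‖v‖ ≤ ‖Aε v‖`.
  have hlow : ∀ v : V, α * ‖v‖ ≤ ‖Aε v‖ := by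
    intro v
    rcases eq_or_ne v 0 with rfl | hv
    · simp
    · have h0 : 0 < ‖v‖ := norm_pos_iff.mpr hv
      have h1 : α * ‖v‖ * ‖v‖ ≤ ‖Aε v‖ * ‖v‖ := by
        calc α * ‖v‖ * ‖v‖ = α * ‖v‖ ^ 2 := by ring
          _ ≤ ⟪Aε v, v⟫ := hcoer v
          _ ≤ ‖Aε v‖ * ‖v‖ := real_inner_le_norm _ _
      exact le_of_mul_le_mul_right h1 h0
  -- Step 3: `Aε` is surjective (Lax–Milgram).
  have hanti : AntilipschitzWith (⟨α, hα.le⟩ : NNReal)⁻¹ Aε := by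
    apply ContinuousLinearMap.antilipschitz_of_bound
    intro x
    have h : α⁻¹ * (α * ‖x‖) ≤ α⁻¹ * ‖Aε x‖ :=
      mul_le_mul_of_nonneg_left (hlow x) (by positivity)
    rw [inv_mul_cancel_left₀ hα.ne' ] at h
    exact le_of_le_of_eq h (congrArg (· * ‖Aε x‖) (NNReal.coe_inv ⟨α, hα.le⟩).symm)
  have hcl : IsClosed (Set.range Aε) := hanti.isClosed_range Aε.uniformContinuous
  have hclS : IsClosed ((LinearMap.range (Aε : V →ₗ[ℝ] V) : Submodule ℝ V) : Set V) := by
    rw [LinearMap.coe_range]; exact hcl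
  haveI : CompleteSpace (LinearMap.range (Aε : V →ₗ[ℝ] V) : Submodule ℝ V) := hclS.completeSpace_coe
  have hortho : (LinearMap.range (Aε : V →ₗ[ℝ] V) : Submodule ℝ V)ᗮ = ⊥ := by
    rw [Submodule.eq_bot_iff]
    intro u hu
    have h0 : ⟪Aε u, u⟫ = 0 := hu (Aε u) (LinearMap.mem_range_self _ u)
    have h1 : α * ‖u‖ ^ 2 ≤ 0 := h0 ▸ hcoer u
    have h2 : ‖u‖ ^ 2 ≤ 0 := by nlinarith
    have : ‖u‖ = 0 := by nlinarith [sq_nonneg ‖u‖, norm_nonneg u]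
    exact norm_eq_zero.mp this
  have hsurj : Function.Surjective Aε := by
    have : (LinearMap.range (Aε : V →ₗ[ℝ] V) : Submodule ℝ V) = ⊤ :=
      Submodule.orthogonal_eq_bot_iff.mp hortho
    exact LinearMap.range_eq_top.mp this
  -- Step 4: compare the two infima.
  rw [hAz]
  have hne1 : Nonempty VH := ⟨0⟩
  have hne2 : Nonempty {w : V // Aε w ∈ VH} := ⟨⟨0, by simp⟩⟩
  have hbdd1 : BddBelow (Set.range fun vH : VH => ‖z - (vH : V)‖) :=
    ⟨0, by rintro x ⟨vH, rfl⟩; positivity⟩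
  have hbdd2 : BddBelow (Set.range fun w : {w : V // Aε w ∈ VH} => ‖z - Aε (w : V)‖) :=
    ⟨0, by rintro x ⟨w, rfl⟩; positivity⟩
  apply le_antisymm
  · apply le_ciInf
    intro w
    exact ciInf_le hbdd1 (⟨Aε w, w.2⟩ : VH)
  · apply le_ciInf
    intro vH
    obtain ⟨w, hw⟩ := hsurj (vH : V)
    have hwmem : Aε w ∈ VH := hw ▸ vH.2
    calc (⨅ w : {w : V // Aε w ∈ VH}, ‖z - Aε (w : V)‖) ≤ ‖z - Aε w‖ :=
          ciInf_le hbdd2 ⟨w, hwmem⟩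
      _ = ‖z - (vH : V)‖ := by rw [hw]
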